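/- Suppose x ∈ ℝⁿ satisfies 0 ≤ x entrywise and eᵀx ≤ 1, and let y = x − (F'ₓ)⁻¹F(x). Then eᵀy = (1 − α − α(eᵀx)²)/(1 − 2α(eᵀx)). -/

import Mathlib

open Matrix BigOperators Finset Filter

noncomputable section

/-- Kronecker product of two vectors: `(u ⊗ w)_{(i,j)} = u_i w_j`. -/
def kron {n : ℕ} (u w : Fin n → ℝ) : Fin n × Fin n → ℝ := fun p => u p.1 * w p.2

/-- `u ⊗ I` : the `n² × n` Kronecker product of a vector with the identity,
so that `(u ⊗ I) w = u ⊗ w`. -/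
def kronVecId {n : ℕ} (u : Fin n → ℝ) : Matrix (Fin n × Fin n) (Fin n) ℝ :=
  Matrix.of fun p k => u p.1 * (if p.2 = k then (1 : ℝ) else 0)

/-- `I ⊗ u` : the `n² × n` Kronecker product of the identity with a vector,
so that `(I ⊗ u) w = w ⊗ u`. -/
def idKronVec {n : ℕ} (u : Fin n → ℝ) : Matrix (Fin n × Fin n) (Fin n) ℝ :=
  Matrix.of fun p k => (if p.1 = k then (1 : ℝ) else 0) * u p.2

/-- `F(x) = x − α R (x ⊗ x) − (1 − α) v`. -/
def Fmap {n : ℕ} (α : ℝ) (R : Matrix (Fin n) (Fin n × Fin n) ℝ) (v : Fin n → ℝ)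
    (x : Fin n → ℝ) : Fin n → ℝ :=
  x - α • R.mulVec (kron x x) - (1 - α) • v

/-- `F'ₓ = I − α R (x ⊗ I + I ⊗ x)`. -/
def Fprime {n : ℕ} (α : ℝ) (R : Matrix (Fin n) (Fin n × Fin n) ℝ)
    (x : Fin n → ℝ) : Matrix (Fin n) (Fin n) ℝ :=
  1 - α • (R * (kronVecId x + idKronVec x))

theorem stmt7 {n : ℕ} (hn : 1 ≤ n) (α : ℝ) (hα0 : 0 < α) (hα : α < 1 / 2)
    (R : Matrix (Fin n) (Fin n × Fin n) ℝ) (hR0 : ∀ i p, 0 ≤ R i p)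
    (hRcol : ∀ p, ∑ i, R i p = 1)
    (v : Fin n → ℝ) (hv0 : 0 ≤ v) (hv1 : ∑ i, v i = 1)
    (x : Fin n → ℝ) (hx0 : 0 ≤ x) (hx1 : ∑ i, x i ≤ 1)
    (y : Fin n → ℝ) (hy : y = x - (Fprime α R x)⁻¹.mulVec (Fmap α R v x)) :
    ∑ i, y i = (1 - α - α * (∑ i, x i) ^ 2) / (1 - 2 * α * (∑ i, x i)) := by
  have hne : Nonempty (Fin n) := ⟨⟨0, hn⟩⟩
  set s : ℝ := ∑ i, x i with hs
  have hs0 : 0 ≤ s := Finset.sum_nonneg fun i _ => hx0 i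
  set c : ℝ := 1 - 2 * α * s with hcdef
  have hsas : 2 * α * s < 1 := by nlinarith
  have hc : 0 < c := by simp [hcdef]; linarith
  set B : Matrix (Fin n × Fin n) (Fin n) ℝ := kronVecId x + idKronVec x with hB
  set A : Matrix (Fin n) (Fin n) ℝ := R * B with hA
  have hB0 : ∀ p k, 0 ≤ B p k := by
    intro p k
    simp only [hB, Matrix.add_apply, kronVecId, idKronVec, Matrix.of_apply]
    apply add_nonneg <;> apply mul_nonneg <;>
      first | exact hx0 _ | (split <;> norm_num)
  have hBcol : ∀ k, ∑ p, B p k = 2 * s := by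
    intro k
    simp only [hB, Matrix.add_apply, kronVecId, idKronVec, Matrix.of_apply]
    rw [Fintype.sum_prod_type]
    simp [Finset.sum_add_distrib, Finset.sum_ite_eq', Finset.sum_ite_eq, mul_comm]
    ring
  have hA0 : ∀ i k, 0 ≤ A i k := by
    intro i k
    simp only [hA, Matrix.mul_apply]
    exact Finset.sum_nonneg fun p _ => mul_nonneg (hR0 i p) (hB0 p k)
  have hAcol : ∀ k, ∑ i, A i k = 2 * s := by
    intro k
    simp only [hA, Matrix.mul_apply]
    rw [Finset.sum_comm]
    calc ∑ p, ∑ i, R i p * B p k = ∑ p : Fin n × Fin n, B p k := by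
          refine Finset.sum_congr rfl fun p _ => ?_
          rw [← Finset.sum_mul, hRcol, one_mul]
      _ = 2 * s := hBcol k
  set M : Matrix (Fin n) (Fin n) ℝ := Fprime α R x with hM
  have hMapply : ∀ i k, M i k = (if i = k then (1:ℝ) else 0) - α * A i k := by
    intro i k
    simp [hM, Fprime, Matrix.sub_apply, Matrix.one_apply, ← hB, ← hA]
  have hMcol : ∀ k, ∑ i, M i k = c := by
    intro k
    simp only [hMapply]
    rw [Finset.sum_sub_distrib, ← Finset.mul_sum, hAcol]
    simp [hcdef]
    ring
  -- invertibility of M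
  have hUnit : IsUnit M := by
    rw [← Matrix.vecMul_injective_iff_isUnit]
    have key : ∀ z : Fin n → ℝ, M.vecMul z = 0 → z = 0 := by
      intro z hz
      set T : ℝ := Finset.univ.sup' Finset.univ_nonempty (fun i => |z i|) with hT
      have hT0 : 0 ≤ T := by
        obtain ⟨i⟩ := hne
        exact le_trans (abs_nonneg (z i)) (Finset.le_sup' (fun j => |z j|) (Finset.mem_univ i))
      have hzk : ∀ k, z k = α * ∑ i, z i * A i k := by
        intro k
        have := congr_fun hz k
        simp only [Matrix.vecMul, dotProduct, hMapply, Pi.zero_apply] at this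
        simp only [mul_sub, Finset.sum_sub_distrib, mul_ite, mul_one, mul_zero,
          Finset.sum_ite_eq', Finset.mem_univ, if_true] at this
        have h2 : ∑ i, z i * (α * A i k) = α * ∑ i, z i * A i k := by
          rw [Finset.mul_sum]; refine Finset.sum_congr rfl fun i _ => by ring
        rw [h2] at this
        linarith
      have hbound : ∀ k, |z k| ≤ 2 * α * s * T := by
        intro k
        rw [hzk k, abs_mul, abs_of_pos hα0]
        calc α * |∑ i, z i * A i k| ≤ α * ∑ i, |z i * A i k| :=
              mul_le_mul_of_nonneg_left (Finset.abs_sum_le_sum_abs _ _) hα0.le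
          _ ≤ α * ∑ i, T * A i k := by
              refine mul_le_mul_of_nonneg_left (Finset.sum_le_sum fun i _ => ?_) hα0.le
              rw [abs_mul, abs_of_nonneg (hA0 i k)]
              exact mul_le_mul_of_nonneg_right
                (Finset.le_sup' (fun j => |z j|) (Finset.mem_univ i)) (hA0 i k)
          _ = 2 * α * s * T := by rw [← Finset.mul_sum, hAcol]; ring
      have hTle : T ≤ 2 * α * s * T := by
        apply Finset.sup'_le
        intro i _
        exact hbound i
      have hTz : T = 0 := by nlinarith
      funext k
      have hb : |z k| ≤ 0 := by
        have := hbound k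
        rw [hTz, mul_zero] at this
        exact this
      simpa using abs_eq_zero.mp (le_antisymm hb (abs_nonneg _))
    intro z₁ z₂ h
    have h' : z₁ ᵥ* M = z₂ ᵥ* M := h
    have h0 : (z₁ - z₂) ᵥ* M = 0 := by
      rw [Matrix.sub_vecMul, h', sub_self]
    exact sub_eq_zero.mp (key _ h0)
  -- e ᵥ* M⁻¹ = c⁻¹ • e
  have heM : (fun _ => (1:ℝ)) ᵥ* M = c • (fun _ => (1:ℝ)) := by
    funext k
    simp only [Matrix.vecMul, dotProduct, one_mul, Pi.smul_apply, smul_eq_mul, mul_one]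
    exact hMcol k
  have heMinv : (fun _ => (1:ℝ)) ᵥ* M⁻¹ = c⁻¹ • (fun _ => (1:ℝ)) := by
    have h1 : ((fun _ => (1:ℝ)) ᵥ* M) ᵥ* M⁻¹ = (fun _ => (1:ℝ)) := by
      rw [Matrix.vecMul_vecMul, Matrix.mul_nonsing_inv M ((Matrix.isUnit_iff_isUnit_det M).mp hUnit), Matrix.vecMul_one]
    rw [heM, Matrix.smul_vecMul] at h1
    have := congr_arg (fun w => c⁻¹ • w) h1
    simpa [smul_smul, inv_mul_cancel₀ hc.ne'] using this
  have hMinvcol : ∀ k, ∑ i, M⁻¹ i k = c⁻¹ := by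
    intro k
    have := congr_fun heMinv k
    simpa [Matrix.vecMul, dotProduct] using this
  -- sum of F
  have hFsum : ∑ k, Fmap α R v x k = s - α * s ^ 2 - (1 - α) := by
    simp only [Fmap, Pi.sub_apply, Pi.smul_apply, smul_eq_mul]
    rw [Finset.sum_sub_distrib, Finset.sum_sub_distrib, ← Finset.mul_sum, ← Finset.mul_sum, hv1]
    have hRK : ∑ k, R.mulVec (kron x x) k = s ^ 2 := by
      simp only [Matrix.mulVec, dotProduct]
      rw [Finset.sum_comm]
      calc ∑ p, ∑ k, R k p * kron x x p = ∑ p : Fin n × Fin n, kron x x p := by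
            refine Finset.sum_congr rfl fun p _ => ?_
            rw [← Finset.sum_mul, hRcol, one_mul]
        _ = s ^ 2 := by
            simp only [kron]
            rw [Fintype.sum_prod_type, ← Finset.sum_mul_sum]
            ring
    rw [hRK]
    ring
  -- sum of M⁻¹ *ᵥ F
  have hMF : ∑ i, (M⁻¹.mulVec (Fmap α R v x)) i = c⁻¹ * (s - α * s ^ 2 - (1 - α)) := by
    simp only [Matrix.mulVec, dotProduct]
    rw [Finset.sum_comm]
    calc ∑ k, ∑ i, M⁻¹ i k * Fmap α R v x k
        = ∑ k, c⁻¹ * Fmap α R v x k := by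
          refine Finset.sum_congr rfl fun k _ => ?_
          rw [← Finset.sum_mul, hMinvcol]
      _ = c⁻¹ * (s - α * s ^ 2 - (1 - α)) := by rw [← Finset.mul_sum, hFsum]
  have hysum : ∑ i, y i = s - c⁻¹ * (s - α * s ^ 2 - (1 - α)) := by
    rw [hy]
    simp only [Pi.sub_apply]
    rw [Finset.sum_sub_distrib, hMF]
  rw [hysum]
  rw [hcdef]
  rw [eq_div_iff (by rw [← hcdef]; exact hc.ne')]
  have hc' : (1 - 2 * α * s) ≠ 0 := by rw [← hcdef]; exact hc.ne'
  have e : (1 - 2 * α * s)⁻¹ * (1 - 2 * α * s) = 1 := inv_mul_cancel₀ hc'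
  linear_combination (-(s - α * s ^ 2 - (1 - α))) * e
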